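/- arXiv:1602.03867 — 6 statements merged into one kernel-verified Lean document; each statement's English description precedes it below -/
import Mathlib

section
/- In any lattice-ordered abelian group, if 0 ≤ x ≤ u, u ≥ 0, and inf(m·x, u + x) = u for a positive natural number m, then m·x = u. -/
private lemma inf_add_le {G : Type*} [Lattice G] [AddCommGroup G]
    [CovariantClass G G (· + ·) (· ≤ ·)]
    {a b c : G} (ha : 0 ≤ a) (hb : 0 ≤ b) (hc : 0 ≤ c) :
    a ⊓ (b + c) ≤ (a ⊓ b) + (a ⊓ c) := by
  have h1 : a ⊓ (b + c) ≤ (a ⊓ b) + a := by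
    calc a ⊓ (b + c) ≤ a := inf_le_left
    _ = 0 + a := (zero_add a).symm
    _ ≤ (a ⊓ b) + a := add_le_add_left (le_inf ha hb) a
  have h2 : a ⊓ (b + c) ≤ (a ⊓ b) + c := by
    calc a ⊓ (b + c) ≤ (a + c) ⊓ (b + c) := le_inf (le_add_of_le_of_nonneg inf_le_left hc) inf_le_right
    _ = (a ⊓ b) + c := by rw [inf_add]
  calc a ⊓ (b + c) ≤ ((a ⊓ b) + a) ⊓ ((a ⊓ b) + c) := le_inf h1 h2
  _ = (a ⊓ b) + (a ⊓ c) := by rw [add_inf]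

private lemma inf_smul_zero {G : Type*} [Lattice G] [AddCommGroup G]
    [CovariantClass G G (· + ·) (· ≤ ·)]
    {a b : G} (ha : 0 ≤ a) (hb : 0 ≤ b) (hab : a ⊓ b = 0) (n : ℕ) :
    a ⊓ (n • b) = 0 := by
  induction n with
  | zero => simp [inf_of_le_right ha]
  | succ k ih =>
    have h1 : a ⊓ ((k + 1) • b) ≤ 0 := by
      have := inf_add_le (c := k • b) ha hb (nsmul_nonneg hb k)
      rw [hab, ih, add_zero] at this
      simpa [succ_nsmul, add_comm] using this
    have h2 : 0 ≤ a ⊓ ((k + 1) • b) := le_inf ha (nsmul_nonneg hb _)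
    exact le_antisymm h1 h2

/-- In any lattice-ordered abelian group, if `0 ≤ x ≤ u`, `0 ≤ u`, and
`inf(m·x, u + x) = u` for a positive natural `m`, then `m·x = u`. -/
theorem lgroup_inf_smul_eq_unit {G : Type*} [Lattice G] [AddCommGroup G]
    [CovariantClass G G (· + ·) (· ≤ ·)]
    (u x : G) (hu : 0 ≤ u) (hx0 : 0 ≤ x) (hxu : x ≤ u)
    (m : ℕ) (hm : 0 < m) (h : (m • x) ⊓ (u + x) = u) : m • x = u := by
  set y := m • x - u with hy
  have hum : u ≤ m • x := h ▸ inf_le_left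
  have hy0 : 0 ≤ y := sub_nonneg.mpr hum
  have hyx : y ⊓ x = 0 := by
    have : (m • x - u) ⊓ (u + x - u) = (m • x) ⊓ (u + x) - u := by
      simp [sub_eq_add_neg, inf_add]
    simp only [add_sub_cancel_left] at this
    rw [hy, this, h, sub_self]
  have hkey : y ⊓ (m • x) = 0 := inf_smul_zero hy0 hx0 hyx m
  have hyle : y ≤ m • x := by
    rw [hy]
    exact sub_le_self _ hu
  have : y = 0 := by rw [← hkey, inf_of_le_left hyle]
  have := sub_eq_zero.mp (hy ▸ this)
  exact this
end

section
/- Let x ∈ [0,1] in the standard MV-algebra on the real unit interval (with x ⊕ y = min(x+y,1) and ¬x = 1−x). If x is irrational, then there is no finite system of MV-algebraic term equations t(x, y₁,…,y_k) = 1 whose real solution set has x as its unique first coordinate; equivalently, for any MV-term t, the set t⁻¹(1) ⊆ [0,1]^{k+1} is a rational polyhedron, so if it consists of a single point then all coordinates of that point are rational. -/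
/-- MV-terms in `k` variables. -/
inductive MVTerm : ℕ → Type
  | var {k : ℕ} (i : Fin k) : MVTerm k
  | zero {k : ℕ} : MVTerm k
  | neg {k : ℕ} : MVTerm k → MVTerm k
  | oplus {k : ℕ} : MVTerm k → MVTerm k → MVTerm k

/-- Interpretation of MV-terms in the standard MV-algebra `[0,1] ⊆ ℝ`,
with `x ⊕ y = min(x+y,1)` and `¬x = 1−x`. -/
def MVTerm.eval : {k : ℕ} → MVTerm k → (Fin k → ℝ) → ℝ
  | _, .var i, v => v i
  | _, .zero, _ => 0
  | _, .neg t, v => 1 - t.eval v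
  | _, .oplus t s, v => min (t.eval v + s.eval v) 1

namespace MVAux

/-- Evaluation of an integer affine functional. -/
def affEval {k : ℕ} (l : (Fin k → ℤ) × ℤ) (v : Fin k → ℝ) : ℝ :=
  (∑ i, (l.1 i : ℝ) * v i) + l.2

lemma continuous_eval {k : ℕ} (t : MVTerm k) : Continuous fun v => t.eval v := by
  induction t with
  | var i => simp only [MVTerm.eval]; exact continuous_apply i
  | zero => simp only [MVTerm.eval]; exact continuous_const
  | neg t ih => simp only [MVTerm.eval]; exact continuous_const.sub ih
  | oplus t s ih1 ih2 =>
    simp only [MVTerm.eval]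
    exact (ih1.add ih2).min continuous_const

/-- Every MV-term evaluates, at each point, to the value of one of finitely many
integer affine functionals. -/
lemma exists_pieces {k : ℕ} (t : MVTerm k) :
    ∃ L : Finset ((Fin k → ℤ) × ℤ), ∀ v, ∃ l ∈ L, t.eval v = affEval l v := by
  induction t with
  | var i =>
    refine ⟨{(fun j => if j = i then 1 else 0, 0)}, fun v => ⟨_, Finset.mem_singleton_self _, ?_⟩⟩
    simp [MVTerm.eval, affEval, ite_smul, Finset.sum_ite_eq]
  | zero =>
    exact ⟨{(fun _ => 0, 0)}, fun v =>
      ⟨_, Finset.mem_singleton_self _, by simp [MVTerm.eval, affEval]⟩⟩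
  | neg t ih =>
    obtain ⟨L, hL⟩ := ih
    refine ⟨L.image (fun l => (fun j => -l.1 j, 1 - l.2)), fun v => ?_⟩
    obtain ⟨l, hl, he⟩ := hL v
    refine ⟨_, Finset.mem_image_of_mem _ hl, ?_⟩
    simp only [MVTerm.eval, affEval, he, Int.cast_neg, Int.cast_sub, Int.cast_one, neg_mul]
    rw [Finset.sum_neg_distrib]
    ring
  | oplus t s ih1 ih2 =>
    obtain ⟨L1, h1⟩ := ih1; obtain ⟨L2, h2⟩ := ih2
    refine ⟨insert (fun _ => 0, 1)
      ((L1 ×ˢ L2).image (fun pq => (fun j => pq.1.1 j + pq.2.1 j, pq.1.2 + pq.2.2))), fun v => ?_⟩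
    obtain ⟨l1, hl1, e1⟩ := h1 v; obtain ⟨l2, hl2, e2⟩ := h2 v
    by_cases hc : t.eval v + s.eval v ≤ 1
    · have hmem : (l1, l2) ∈ L1 ×ˢ L2 := Finset.mem_product.2 ⟨hl1, hl2⟩
      refine ⟨(fun j => l1.1 j + l2.1 j, l1.2 + l2.2), Finset.mem_insert_of_mem
        (Finset.mem_image_of_mem _ hmem), ?_⟩
      simp only [MVTerm.eval, min_eq_left hc, affEval, Int.cast_add, add_mul] at *
      rw [Finset.sum_add_distrib, e1, e2]; ring
    · exact ⟨_, Finset.mem_insert_self _ _, by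
        simp [MVTerm.eval, affEval, min_eq_right (le_of_not_ge hc)]⟩

/-- A ℚ-linear functional on ℝ killing all rationals but not a given irrational. -/
lemma exists_phi (α : ℝ) (hα : Irrational α) :
    ∃ φ : ℝ →ₗ[ℚ] ℚ, (∀ q : ℚ, φ (q:ℝ) = 0) ∧ φ α = 1 := by
  have hy : ∀ a : ℚ, a • (1:ℝ) ≠ α := fun a ha => hα ⟨a, by simpa using ha⟩
  have li : LinearIndepOn ℚ id ({1, α} : Set ℝ) :=
    linearIndepOn_id_pair one_ne_zero hy
  have h1mem : (1:ℝ) ∈ li.extend (Set.subset_univ _) := li.subset_extend _ (by simp)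
  have hαmem : α ∈ li.extend (Set.subset_univ _) := li.subset_extend _ (by simp)
  refine ⟨(Module.Basis.extend li).coord ⟨α, hαmem⟩, ?_, ?_⟩
  · intro q
    have hne : (⟨1, h1mem⟩ : li.extend (Set.subset_univ _)) ≠ ⟨α, hαmem⟩ := fun hcon =>
      hα ⟨1, by simpa using (congrArg Subtype.val hcon)⟩
    have e1 : (Module.Basis.extend li).coord ⟨α, hαmem⟩ ((Module.Basis.extend li) ⟨1, h1mem⟩) = 0 := by
      rw [Module.Basis.coord_apply, Module.Basis.repr_self, Finsupp.single_apply]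
      simp [hne]
    rw [Module.Basis.extend_apply_self] at e1
    have : (q:ℝ) = q • (1:ℝ) := by simp
    rw [this, map_smul, e1, smul_zero]
  · have e1 : (Module.Basis.extend li).coord ⟨α, hαmem⟩ ((Module.Basis.extend li) ⟨α, hαmem⟩) = 1 := by
      rw [Module.Basis.coord_apply, Module.Basis.repr_self, Finsupp.single_apply]; simp
    rwa [Module.Basis.extend_apply_self] at e1

end MVAux

open MVAux Filter Set in
/-- If the solution set in `[0,1]^{k+1}` of an MV-term equation `t = 1` consists of a
single point, then all the coordinates of that point are rational. -/
theorem mvterm_singleton_solution_rational (k : ℕ) (t : MVTerm (k + 1))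
    (p : Fin (k + 1) → ℝ) (hp : ∀ i, p i ∈ Set.Icc (0 : ℝ) 1)
    (h : {v : Fin (k + 1) → ℝ | (∀ i, v i ∈ Set.Icc (0 : ℝ) 1) ∧ t.eval v = 1} = {p}) :
    ∀ i, ∃ q : ℚ, p i = (q : ℝ) := by
  classical
  by_contra hcon
  push_neg at hcon
  obtain ⟨i₀, hi₀⟩ := hcon
  have hirr : Irrational (p i₀) := fun ⟨q, hq⟩ => hi₀ q hq.symm
  obtain ⟨φ, hφrat, hφα⟩ := exists_phi (p i₀) hirr
  -- the perturbation direction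
  set w : Fin (k + 1) → ℝ := fun i => ((φ (p i) : ℚ) : ℝ) with hw
  have hw0 : ∀ i, (∃ q : ℚ, p i = (q : ℝ)) → w i = 0 := by
    rintro i ⟨q, hq⟩
    simp [hw, hq, hφrat q]
  have hwi₀ : w i₀ = 1 := by simp [hw, hφα]
  -- p is a solution
  have hpmem : p ∈ {v : Fin (k + 1) → ℝ | (∀ i, v i ∈ Set.Icc (0 : ℝ) 1) ∧ t.eval v = 1} := by
    rw [h]; exact rfl
  have htp : t.eval p = 1 := hpmem.2
  -- key: integer affine functionals equal to 1 at p stay equal to 1 along the perturbation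
  have key : ∀ l : (Fin (k + 1) → ℤ) × ℤ, affEval l p = 1 →
      ∀ s : ℝ, affEval l (fun i => p i + s * w i) = 1 := by
    intro l hl s
    have hsum : ∑ i, (l.1 i : ℝ) * p i = 1 - (l.2 : ℝ) := by
      have := hl; unfold affEval at this; linarith
    have hφsum : φ (∑ i, (l.1 i : ℝ) * p i) = ∑ i, (l.1 i : ℚ) * φ (p i) := by
      rw [map_sum]
      refine Finset.sum_congr rfl fun i _ => ?_
      have e : (l.1 i : ℝ) * p i = (l.1 i) • p i := (zsmul_eq_mul _ _).symm
      rw [e, map_zsmul, zsmul_eq_mul]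
    have hzero : ∑ i, (l.1 i : ℚ) * φ (p i) = 0 := by
      rw [← hφsum, hsum]
      have e1 : (1 : ℝ) - (l.2 : ℝ) = (((1 - l.2 : ℚ) : ℝ)) := by push_cast; ring
      rw [e1, hφrat]
    have hww : ∑ i, (l.1 i : ℝ) * w i = 0 := by
      have : ∑ i, (l.1 i : ℝ) * w i = (((∑ i, (l.1 i : ℚ) * φ (p i)) : ℚ) : ℝ) := by
        push_cast [hw]; rfl
      rw [this, hzero]; simp
    unfold affEval at *
    have expand : ∑ i, (l.1 i : ℝ) * (p i + s * w i)
        = (∑ i, (l.1 i : ℝ) * p i) + s * ∑ i, (l.1 i : ℝ) * w i := by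
      rw [Finset.mul_sum, ← Finset.sum_add_distrib]
      refine Finset.sum_congr rfl fun i _ => by ring
    rw [expand, hww, hsum]; ring
  -- the perturbed family
  set F : ℝ → Fin (k + 1) → ℝ := fun s i => p i + s * w i with hF
  have hFcont : ∀ i, Continuous fun s => F s i := fun i =>
    continuous_const.add (continuous_id.mul continuous_const)
  -- eventually the perturbed point is in the cube
  have E1 : ∀ᶠ s in nhds (0 : ℝ), ∀ i, F s i ∈ Set.Icc (0 : ℝ) 1 := by
    rw [eventually_all]
    intro i
    by_cases hq : ∃ q : ℚ, p i = (q : ℝ)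
    · have hwz := hw0 i hq
      filter_upwards with s
      simp only [hF, hwz, mul_zero, add_zero]
      exact hp i
    · have h0 : p i ≠ 0 := fun e => hq ⟨0, by simp [e]⟩
      have h1 : p i ≠ 1 := fun e => hq ⟨1, by simp [e]⟩
      have hio : p i ∈ Set.Ioo (0 : ℝ) 1 :=
        ⟨lt_of_le_of_ne (hp i).1 (Ne.symm h0), lt_of_le_of_ne (hp i).2 h1⟩
      have hc : ContinuousAt (fun s => F s i) 0 := (hFcont i).continuousAt
      have hmem : Set.Ioo (0 : ℝ) 1 ∈ nhds (F 0 i) := by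
        have : F 0 i = p i := by simp [hF]
        rw [this]
        exact isOpen_Ioo.mem_nhds hio
      exact (hc.eventually_mem hmem).mono fun s hs => Set.Ioo_subset_Icc_self hs
  -- eventually the perturbed point is a solution of t = 1
  obtain ⟨L, hL⟩ := exists_pieces t
  have hfc : Continuous fun s => t.eval (F s) :=
    (continuous_eval t).comp (continuous_pi hFcont)
  have hf0 : t.eval (F 0) = 1 := by
    have : F 0 = p := by funext i; simp [hF]
    rw [this, htp]
  have E2' : ∀ᶠ s in nhds (0 : ℝ), ∀ l ∈ L, affEval l p ≠ 1 →
      t.eval (F s) ≠ affEval l (F s) := by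
    rw [eventually_all_finset]
    intro l hl
    by_cases hone : affEval l p = 1
    · filter_upwards with s hs; exact absurd hone hs
    · have hgc : Continuous fun s => affEval l (F s) := by
        unfold affEval
        exact (continuous_finset_sum _ fun i _ =>
          (continuous_const.mul (hFcont i))).add continuous_const
      have hd : ContinuousAt (fun s => t.eval (F s) - affEval l (F s)) 0 :=
        (hfc.sub hgc).continuousAt
      have hne0 : t.eval (F 0) - affEval l (F 0) ≠ 0 := by
        have : F 0 = p := by funext i; simp [hF]
        rw [this, htp]
        intro hcon
        exact hone (by linarith)
      have := hd.eventually_ne hne0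
      filter_upwards [this] with s hs _ hcon
      exact hs (by rw [hcon]; ring)
  have E2 : ∀ᶠ s in nhds (0 : ℝ), t.eval (F s) = 1 := by
    filter_upwards [E2'] with s hs
    obtain ⟨l, hl, he⟩ := hL (F s)
    by_cases hone : affEval l p = 1
    · rw [he]; exact key l hone s
    · exact absurd he (hs l hl hone)
  -- pick a nonzero s
  have E3 : ∀ᶠ s in nhdsWithin (0 : ℝ) {(0:ℝ)}ᶜ,
      (∀ i, F s i ∈ Set.Icc (0 : ℝ) 1) ∧ t.eval (F s) = 1 ∧ s ≠ 0 := by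
    have := (E1.and E2).filter_mono (nhdsWithin_le_nhds (s := {(0:ℝ)}ᶜ))
    filter_upwards [this, self_mem_nhdsWithin] with s hs hs'
    exact ⟨hs.1, hs.2, hs'⟩
  obtain ⟨s, hs1, hs2, hs3⟩ := E3.exists
  have hFs : F s ∈ {v : Fin (k + 1) → ℝ | (∀ i, v i ∈ Set.Icc (0 : ℝ) 1) ∧ t.eval v = 1} :=
    ⟨hs1, hs2⟩
  rw [h, Set.mem_singleton_iff] at hFs
  have : F s i₀ = p i₀ := congrFun hFs i₀
  simp only [hF, hwi₀, mul_one] at this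
  exact hs3 (by linarith)
end

section
/- Every subalgebra of ℚ ∩ [0,1] (with MV-operations x ⊕ y = min(x+y,1), ¬x = 1−x) that is finitely generated is finite, and is of the form {0, 1/n, 2/n, …, 1} for some positive integer n. -/
/-- MV-sum on `ℚ`: `x ⊕ y = min(x+y, 1)`. -/
def qoplus (x y : ℚ) : ℚ := min (x + y) 1

/-- MV-negation on `ℚ`: `¬x = 1 − x`. -/
def qneg (x : ℚ) : ℚ := 1 - x

/-- A subalgebra of the MV-algebra `ℚ ∩ [0,1]`. -/
def IsMVSubalgebra (A : Set ℚ) : Prop :=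
  A ⊆ Set.Icc 0 1 ∧ 0 ∈ A ∧ (∀ x ∈ A, qneg x ∈ A) ∧ ∀ x ∈ A, ∀ y ∈ A, qoplus x y ∈ A

/-- The finite chain `{0, 1/m, …, 1}`. -/
def Sset (m : ℕ) : Set ℚ := {q : ℚ | ∃ k : ℕ, k ≤ m ∧ q = (k : ℚ) / m}

lemma Sset_finite (m : ℕ) : (Sset m).Finite := by
  apply Set.Finite.subset ((Set.finite_Iic m).image (fun k : ℕ => (k : ℚ) / m))
  rintro q ⟨k, hk, rfl⟩
  exact ⟨k, hk, rfl⟩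

lemma Sset_isSub {m : ℕ} (hm : 0 < m) : IsMVSubalgebra (Sset m) := by
  have hm' : (0 : ℚ) < m := by exact_mod_cast hm
  refine ⟨?_, ⟨0, by simp⟩, ?_, ?_⟩
  · rintro q ⟨k, hk, rfl⟩
    refine ⟨by positivity, ?_⟩
    rw [div_le_one hm']; exact_mod_cast hk
  · rintro q ⟨k, hk, rfl⟩
    refine ⟨m - k, Nat.sub_le _ _, ?_⟩
    rw [qneg, Nat.cast_sub hk]
    field_simp
  · rintro x ⟨k, hk, rfl⟩ y ⟨j, hj, rfl⟩
    refine ⟨min (k + j) m, min_le_right _ _, ?_⟩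
    rw [qoplus, ← add_div]
    push_cast
    rcases le_total ((k : ℚ) + j) (m : ℚ) with h | h
    · rw [min_eq_left h, min_eq_left (by rw [div_le_one hm']; exact h)]
    · rw [min_eq_right h, min_eq_right (by rw [le_div_iff₀ hm', one_mul]; exact h),
        div_self hm'.ne']

/-- Every finitely generated subalgebra of `ℚ ∩ [0,1]` is finite and of the form
`{0, 1/m, 2/m, …, 1}` for some positive integer `m`. -/
theorem finitely_generated_subalgebra_of_rationals (A : Set ℚ) (hA : IsMVSubalgebra A)
    (F : Finset ℚ) (hFA : ↑F ⊆ A)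
    (hgen : ∀ B : Set ℚ, IsMVSubalgebra B → ↑F ⊆ B → A ⊆ B) :
    A.Finite ∧ ∃ m : ℕ, 0 < m ∧ A = {q : ℚ | ∃ k : ℕ, k ≤ m ∧ q = (k : ℚ) / m} := by
  obtain ⟨hIcc, h0, hneg, hop⟩ := hA
  -- a common denominator for F
  set M : ℕ := ∏ q ∈ F, q.den with hM
  have hMpos : 0 < M := Finset.prod_pos (fun q _ => q.pos)
  have hMQ : (0 : ℚ) < M := by exact_mod_cast hMpos
  have hFS : ↑F ⊆ Sset M := by
    intro q hq
    have hq01 : q ∈ Set.Icc (0:ℚ) 1 := hIcc (hFA hq)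
    have hdvd : q.den ∣ M := Finset.dvd_prod_of_mem _ hq
    obtain ⟨c, hc⟩ := hdvd
    have hnum : 0 ≤ q.num := Rat.num_nonneg.2 hq01.1
    have hdpos : 0 < q.den := q.den_pos
    have hdQ : (0 : ℚ) < (q.den : ℚ) := by exact_mod_cast hdpos
    have h1 : q.num ≤ (q.den : ℤ) := by
      have h2 := hq01.2
      rw [← Rat.num_div_den q, div_le_one hdQ] at h2
      exact_mod_cast h2
    refine ⟨q.num.toNat * c, ?_, ?_⟩
    · -- k ≤ M since q ≤ 1
      have h2 : q.num.toNat ≤ q.den := Int.toNat_le.2 h1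
      calc q.num.toNat * c ≤ q.den * c := Nat.mul_le_mul_right _ h2
      _ = M := hc.symm
    · have hcpos : 0 < c := by
        rcases Nat.eq_zero_or_pos c with h | h
        · rw [h, Nat.mul_zero] at hc; omega
        · exact h
      have hcQ : (c : ℚ) ≠ 0 := by exact_mod_cast hcpos.ne'
      have hMc : (M : ℚ) = (q.den : ℚ) * c := by exact_mod_cast congrArg (Nat.cast : ℕ → ℚ) hc
      have htn : ((q.num.toNat : ℕ) : ℚ) = (q.num : ℚ) := by
        exact_mod_cast congrArg (fun z : ℤ => (z : ℚ)) (Int.toNat_of_nonneg hnum)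
      have hkc : (((q.num.toNat * c : ℕ)) : ℚ) = (q.num : ℚ) * c := by
        rw [Nat.cast_mul, htn]
      rw [hkc, hMc, mul_div_mul_right _ _ hcQ]
      exact (Rat.num_div_den q).symm
  have hAS : A ⊆ Sset M := hgen _ (Sset_isSub hMpos) hFS
  have hfin : A.Finite := (Sset_finite M).subset hAS
  refine ⟨hfin, ?_⟩
  -- 1 ∈ A
  have h1A : (1 : ℚ) ∈ A := by simpa [qneg] using hneg 0 h0
  -- truncated subtraction
  have hsub : ∀ x ∈ A, ∀ y ∈ A, y ≤ x → x - y ∈ A := by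
    intro x hx y hy hle
    have hx1 : x ≤ 1 := (hIcc hx).2
    have := hneg _ (hop _ (hneg x hx) _ hy)
    have heq : qneg (qoplus (qneg x) y) = x - y := by
      rw [qneg, qoplus, qneg, min_eq_left (by linarith)]
      ring
    rwa [heq] at this
  -- the minimal positive element
  have hPfin : ({x ∈ A | 0 < x}).Finite := hfin.subset (Set.sep_subset _ _)
  have hPne : ({x ∈ A | 0 < x}).Nonempty := ⟨1, h1A, one_pos⟩
  obtain ⟨a, ⟨haA, hapos⟩, hamin⟩ := Set.exists_min_image _ id hPfin hPne
  have ha1 : a ≤ 1 := (hIcc haA).2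
  -- multiples of a
  have hmult : ∀ j : ℕ, min ((j : ℚ) * a) 1 ∈ A := by
    intro j
    induction j with
    | zero => simpa using h0
    | succ j ih =>
      have := hop _ haA _ ih
      have heq : qoplus a (min ((j : ℚ) * a) 1) = min (((j : ℚ) + 1) * a) 1 := by
        rw [qoplus]
        rcases le_or_gt ((j : ℚ) * a) 1 with h | h
        · rw [min_eq_left h]; ring_nf
        · rw [min_eq_right h.le, min_eq_right (by linarith), min_eq_right (by nlinarith)]
      rw [heq] at this
      simpa [add_comm] using this
  -- n := ⌊1/a⌋₊ satisfies n*a = 1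
  set n : ℕ := ⌊(1 : ℚ) / a⌋₊ with hn
  have hnpos : 0 < n := by
    rw [hn]
    exact Nat.floor_pos.2 (by rw [le_div_iff₀ hapos, one_mul]; exact ha1)
  have hna_le : (n : ℚ) * a ≤ 1 := by
    have := Nat.floor_le (by positivity : (0:ℚ) ≤ 1 / a)
    rw [← hn] at this
    calc (n : ℚ) * a ≤ (1 / a) * a := by nlinarith
    _ = 1 := by field_simp
  have hna_gt : 1 < ((n : ℚ) + 1) * a := by
    have := Nat.lt_floor_add_one ((1 : ℚ) / a)
    rw [← hn] at this
    calc (1 : ℚ) = (1 / a) * a := by field_simp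
    _ < ((n : ℚ) + 1) * a := by nlinarith
  have hnaA : (n : ℚ) * a ∈ A := by
    have := hmult n
    rwa [min_eq_left hna_le] at this
  have hna_eq : (n : ℚ) * a = 1 := by
    by_contra hne
    have hlt : (n : ℚ) * a < 1 := lt_of_le_of_ne hna_le hne
    have hmem : 1 - (n : ℚ) * a ∈ A := hsub _ h1A _ hnaA hna_le
    have hpos : 0 < 1 - (n : ℚ) * a := by linarith
    have := hamin _ ⟨hmem, hpos⟩
    simp only [id] at this
    linarith
  refine ⟨n, hnpos, ?_⟩
  have hnQ : (0 : ℚ) < n := by exact_mod_cast hnpos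
  have ha_eq : a = 1 / n := by
    field_simp
    linarith [hna_eq]
  ext x
  constructor
  · intro hx
    have hx0 : 0 ≤ x := (hIcc hx).1
    have hx1 : x ≤ 1 := (hIcc hx).2
    set j : ℕ := ⌊x / a⌋₊ with hj
    have hja_le : (j : ℚ) * a ≤ x := by
      have := Nat.floor_le (by positivity : (0:ℚ) ≤ x / a)
      rw [← hj] at this
      calc (j : ℚ) * a ≤ (x / a) * a := by nlinarith
      _ = x := by field_simp
    have hja_gt : x < ((j : ℚ) + 1) * a := by
      have := Nat.lt_floor_add_one (x / a)
      rw [← hj] at this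
      calc x = (x / a) * a := by field_simp
      _ < ((j : ℚ) + 1) * a := by nlinarith
    have hjaA : (j : ℚ) * a ∈ A := by
      have := hmult j
      rwa [min_eq_left (le_trans hja_le hx1)] at this
    have heq : x = (j : ℚ) * a := by
      by_contra hne
      have hlt : (j : ℚ) * a < x := lt_of_le_of_ne hja_le (Ne.symm hne)
      have hmem : x - (j : ℚ) * a ∈ A := hsub _ hx _ hjaA hja_le
      have hpos : 0 < x - (j : ℚ) * a := by linarith
      have := hamin _ ⟨hmem, hpos⟩
      simp only [id] at this
      linarith
    refine ⟨j, ?_, ?_⟩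
    · -- j ≤ n
      by_contra hgt
      push_neg at hgt
      have : (n : ℚ) + 1 ≤ (j : ℚ) := by exact_mod_cast hgt
      nlinarith
    · rw [heq, ha_eq]; ring
  · rintro ⟨k, hk, rfl⟩
    have hkQ : (k : ℚ) ≤ n := by exact_mod_cast hk
    have : (k : ℚ) / n = (k : ℚ) * a := by rw [ha_eq]; ring
    rw [this]
    have hle : (k : ℚ) * a ≤ 1 := by nlinarith
    have := hmult k
    rwa [min_eq_left hle] at this
end

section
/- In the finite chain Sₙ viewed as an MV-algebra, the element 1/n satisfies (n−1)·x = ¬x (where k·x denotes x ⊕ ⋯ ⊕ x, k times), and for any MV-algebra A and any element y ∈ A satisfying (n−1)·y = ¬y, there is a unique MV-algebra homomorphism f : Sₙ → A with f(1/n) = y. (That is, Sₙ is presented as an MV-algebra by the formula (n−1)x = ¬x.) -/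
/-- An MV-algebra `(A, ⊕, ¬, 0)`. -/
class MV (A : Type*) where
  oplus : A → A → A
  neg : A → A
  zero : A
  oplus_assoc : ∀ x y z : A, oplus x (oplus y z) = oplus (oplus x y) z
  oplus_comm : ∀ x y : A, oplus x y = oplus y x
  oplus_zero : ∀ x : A, oplus x zero = x
  neg_neg : ∀ x : A, neg (neg x) = x
  oplus_neg_zero : ∀ x : A, oplus x (neg zero) = neg zero
  luk : ∀ x y : A, oplus (neg (oplus (neg x) y)) y = oplus (neg (oplus (neg y) x)) x

namespace MV

variable {A : Type*} [MV A]

/-- `1 := ¬0`. -/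
def one : A := neg zero

/-- MV-product `x ⊙ y := ¬(¬x ⊕ ¬y)`. -/
def odot (x y : A) : A := neg (oplus (neg x) (neg y))

/-- The natural order: `x ≤ y` iff `¬x ⊕ y = 1`. -/
def le (x y : A) : Prop := oplus (neg x) y = one

/-- `k`-fold MV-sum `k·x = x ⊕ ⋯ ⊕ x`. -/
def smul : ℕ → A → A
  | 0, _ => zero
  | k + 1, x => oplus x (smul k x)

end MV

/-- `k`-fold MV-sum on `ℚ`. -/
def qsmul : ℕ → ℚ → ℚ
  | 0, _ => 0
  | k + 1, x => qoplus x (qsmul k x)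


section Aux


namespace MV

variable {A : Type*} [MV A]

theorem zero_oplus' (x : A) : oplus zero x = x := by
  rw [oplus_comm]; exact oplus_zero x

theorem neg_one' : neg (one : A) = zero := neg_neg zero

theorem oplus_one' (x : A) : oplus x one = one := oplus_neg_zero x

theorem neg_oplus_self' (x : A) : oplus (neg x) x = one := by
  have h := luk (one (A := A)) x
  rw [neg_one', zero_oplus', oplus_one'] at h
  exact h

theorem smul_add' (a b : ℕ) (y : A) :
    smul (a + b) y = oplus (smul a y) (smul b y) := by
  induction a with
  | zero => simp [smul, zero_oplus']
  | succ a ih =>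
    rw [Nat.succ_add]
    show oplus y (smul (a + b) y) = oplus (oplus y (smul a y)) (smul b y)
    rw [ih, oplus_assoc]

theorem key' (y b : A) (h : oplus (neg y) (neg b) = one) :
    neg (oplus y (neg (oplus y b))) = b := by
  have h2 := luk (neg b) y
  rw [neg_neg, h, neg_one', zero_oplus'] at h2
  -- h2 : oplus (neg (oplus b y)) y = neg b
  rw [oplus_comm y (neg (oplus y b)), oplus_comm y b, h2, neg_neg]

theorem neg_smul' {n : ℕ} (hn : 0 < n) {y : A} (hy : smul (n - 1) y = neg y) :
    ∀ k, k ≤ n → neg (smul k y) = smul (n - k) y := by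
  intro k
  induction k with
  | zero =>
    intro _
    show neg zero = smul (n - 0) y
    rw [show n - 0 = 1 + (n - 1) from by omega, smul_add']
    show neg zero = oplus (oplus y zero) (smul (n - 1) y)
    rw [oplus_zero, hy, oplus_comm]
    exact (neg_oplus_self' y).symm
  | succ k ih =>
    intro hk
    have ihk := ih (by omega)
    have hnk : n - k = (n - (k + 1)) + 1 := by omega
    have hsk : smul k y = neg (oplus y (smul (n - (k + 1)) y)) := by
      have h := congrArg neg ihk
      rw [neg_neg] at h
      rw [h, hnk]
      rfl
    have hcond : oplus (neg y) (neg (smul (n - (k + 1)) y)) = one := by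
      rw [← hy, show n - 1 = k + (n - (k + 1)) from by omega, smul_add',
        ← oplus_assoc, oplus_comm (smul (n - (k+1)) y) (neg (smul (n - (k+1)) y)),
        neg_oplus_self', oplus_one']
    show neg (oplus y (smul k y)) = smul (n - (k + 1)) y
    rw [hsk]
    exact key' y _ hcond

theorem smul_one' {n : ℕ} (hn : 0 < n) {y : A} (hy : smul (n - 1) y = neg y)
    {m : ℕ} (hm : n ≤ m) : smul m y = one := by
  have h0 := neg_smul' hn hy 0 (by omega)
  have hsn : smul n y = one := by
    rw [Nat.sub_zero] at h0
    exact h0.symm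
  rw [show m = (m - n) + n from by omega, smul_add', hsn, oplus_one']

end MV

theorem qsmul_eq (n : ℕ) (hn : 0 < n) : ∀ k : ℕ, k ≤ n → qsmul k (1 / (n : ℚ)) = k / n := by
  intro k
  induction k with
  | zero => intro _; simp [qsmul]
  | succ k ih =>
    intro hk
    have hn' : (0 : ℚ) < n := by exact_mod_cast hn
    rw [qsmul, qoplus, ih (by omega)]
    rw [← add_div]
    rw [min_eq_left]
    · push_cast; ring_nf
    · rw [div_le_one hn']
      have : (k : ℚ) + 1 ≤ n := by exact_mod_cast hk
      linarith


end Aux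

/-- `Sₙ` is presented by the formula `(n−1)x = ¬x`: the generator `1/n` of `Sₙ`
satisfies it, and for any MV-algebra `A` and `y ∈ A` with `(n−1)·y = ¬y` there is a
unique MV-algebra homomorphism `f : Sₙ → A` (given on `Sₙ = {k/n : 0 ≤ k ≤ n}` as a
function of the numerator `k`) with `f(1/n) = y`. -/
theorem finite_chain_presented (n : ℕ) (hn : 0 < n) :
    qsmul (n - 1) (1 / (n : ℚ)) = qneg (1 / (n : ℚ)) ∧
    ∀ (A : Type) [MV A], ∀ y : A, MV.smul (n - 1) y = MV.neg y →
      ∃! f : Fin (n + 1) → A,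
        f ⟨1, by omega⟩ = y ∧
        f ⟨0, by omega⟩ = MV.zero ∧
        (∀ k : Fin (n + 1), f ⟨n - k.val, by omega⟩ = MV.neg (f k)) ∧
        (∀ k l : Fin (n + 1),
          f ⟨min (k.val + l.val) n, by omega⟩ = MV.oplus (f k) (f l)) := by
  constructor
  · rw [qsmul_eq n hn (n - 1) (by omega), qneg]
    have hn' : (0 : ℚ) < n := by exact_mod_cast hn
    rw [Nat.cast_sub hn]
    field_simp
    norm_num
  · intro A _ y hy
    refine ⟨fun k => MV.smul k.val y, ⟨?_, ?_, ?_, ?_⟩, ?_⟩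
    · show MV.oplus y (MV.smul 0 y) = y
      show MV.oplus y MV.zero = y
      exact MV.oplus_zero y
    · rfl
    · intro k
      exact (MV.neg_smul' hn hy k.val (by omega)).symm
    · intro k l
      show MV.smul (min (k.val + l.val) n) y = MV.oplus (MV.smul k.val y) (MV.smul l.val y)
      rw [← MV.smul_add']
      rcases le_or_gt (k.val + l.val) n with h | h
      · rw [min_eq_left h]
      · rw [min_eq_right (by omega)]
        rw [MV.smul_one' hn hy (le_refl n), MV.smul_one' hn hy (by omega : n ≤ k.val + l.val)]
    · rintro g ⟨hg1, hg2, hg3, hg4⟩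
      have main : ∀ m, m ≤ n → ∀ (hm : m < n + 1), g ⟨m, hm⟩ = MV.smul m y := by
        intro m
        induction m with
        | zero => intro _ _; exact hg2
        | succ m ih =>
          intro hm hm'
          have h4 := hg4 ⟨m, by omega⟩ ⟨1, by omega⟩
          rw [ih (by omega) (by omega), hg1] at h4
          have hmin : min (m + 1) n = m + 1 := by omega
          simp only [hmin] at h4
          rw [h4]
          show MV.oplus (MV.smul m y) y = MV.oplus y (MV.smul m y)
          exact MV.oplus_comm _ _
      funext k
      exact main k.val (by omega) k.isLt
end

section
/- Let A be an MV-algebra in which every element x satisfies ((n+1)x)² = 0 or (n+1)x = 1, with 0 ≠ 1 (i.e., A is a model of Loc¹_V). Then Rad(A) := {x : ((n+1)x)²=0} is the unique maximal ideal of A: every proper ideal of A is contained in Rad(A). -/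
/-- An ideal of an MV-algebra: contains `0`, downward closed, closed under `⊕`. -/
def MV.IsIdeal {A : Type*} [MV A] (I : Set A) : Prop :=
  MV.zero ∈ I ∧ (∀ x y : A, MV.le x y → y ∈ I → x ∈ I) ∧
    ∀ x ∈ I, ∀ y ∈ I, MV.oplus x y ∈ I

/-- If `A` is an MV-algebra with `0 ≠ 1` in which every `x` satisfies
`((n+1)x)² = 0` or `(n+1)x = 1`, and `Rad(A) = {x : ((n+1)x)² = 0}` is an ideal,
then `Rad(A)` is the unique maximal ideal: every proper ideal is contained in it. -/
theorem radical_unique_maximal_ideal {A : Type*} [MV A] (n : ℕ)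
    (h01 : (MV.zero : A) ≠ MV.one)
    (hloc : ∀ x : A,
      MV.odot (MV.smul (n + 1) x) (MV.smul (n + 1) x) = MV.zero ∨
        MV.smul (n + 1) x = MV.one)
    (hrad : MV.IsIdeal
      {x : A | MV.odot (MV.smul (n + 1) x) (MV.smul (n + 1) x) = MV.zero}) :
    ∀ I : Set A, MV.IsIdeal I → I ≠ Set.univ →
      I ⊆ {x : A | MV.odot (MV.smul (n + 1) x) (MV.smul (n + 1) x) = MV.zero} := by
  intro I hI hIne x hx
  obtain ⟨h0, hdown, hplus⟩ := hI
  -- smul k x ∈ I for all k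
  have hsm : ∀ k : ℕ, MV.smul k x ∈ I := by
    intro k
    induction k with
    | zero => exact h0
    | succ k ih => exact hplus x hx _ ih
  rcases hloc x with h | h
  · exact h
  · exfalso
    apply hIne
    ext y
    simp only [Set.mem_univ, iff_true]
    apply hdown y MV.one
    · show MV.oplus (MV.neg y) MV.one = MV.one
      exact MV.oplus_neg_zero _
    · rw [← h]; exact hsm (n + 1)
end

section
/- For any irrational ξ ∈ [0,1], the element ξ of the standard MV-algebra [0,1] is not definable by a geometric formula in the following concrete sense: there is no countable family of MV-terms tᵢ(x, y⃗ᵢ) such that for all a ∈ [0,1], (∃i ∃ y⃗ᵢ ∈ [0,1]^{kᵢ} with tᵢ(a, y⃗ᵢ) = 1) holds if and only if a = ξ. Key lemma: for any MV-term t in k+1 variables on [0,1], if the solution set {(a, y⃗) : t(a,y⃗) = 1} projects to a single point {a} on the first coordinate, then a is rational. -/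
open Finset

/-- Affine function with rational coefficients, evaluated on reals. -/
def aff {n : ℕ} (p : (Fin n → ℚ) × ℚ) (v : Fin n → ℝ) : ℝ :=
  (∑ i, (p.1 i : ℝ) * v i) + (p.2 : ℝ)

lemma univ_ne {ι : Type*} [Fintype ι] [Nonempty ι] : (Finset.univ : Finset ι).Nonempty :=
  Finset.univ_nonempty

/-- `F` is a pointwise min of maxes of rational affine functions. -/
def IsMM {n : ℕ} (F : (Fin n → ℝ) → ℝ) : Prop :=
  ∃ (ι κ : Type) (_ : Fintype ι) (_ : Fintype κ) (_ : Nonempty ι) (_ : Nonempty κ)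
    (A : ι → κ → (Fin n → ℚ) × ℚ),
    ∀ v, F v = Finset.univ.inf' univ_ne
      (fun i => Finset.univ.sup' univ_ne (fun j => aff (A i j) v))

section helpers
variable {ι κ ι₁ ι₂ : Type*} [Fintype ι] [Fintype κ] [Fintype ι₁] [Fintype ι₂]
  [Nonempty ι] [Nonempty κ] [Nonempty ι₁] [Nonempty ι₂]

lemma one_sub_inf' (f : ι → ℝ) :
    1 - Finset.univ.inf' univ_ne f = Finset.univ.sup' univ_ne (fun i => 1 - f i) := by
  obtain ⟨i0, -, h0⟩ := Finset.exists_mem_eq_inf' (univ_ne (ι := ι)) f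
  apply le_antisymm
  · rw [h0]; exact Finset.le_sup' (fun i => 1 - f i) (mem_univ i0)
  · apply Finset.sup'_le
    intro i _
    have := Finset.inf'_le f (mem_univ i)
    linarith

lemma one_sub_sup' (f : ι → ℝ) :
    1 - Finset.univ.sup' univ_ne f = Finset.univ.inf' univ_ne (fun i => 1 - f i) := by
  obtain ⟨i0, -, h0⟩ := Finset.exists_mem_eq_sup' (univ_ne (ι := ι)) f
  apply le_antisymm
  · apply Finset.le_inf'
    intro i _
    have := Finset.le_sup' f (mem_univ i)
    linarith
  · rw [h0]; exact Finset.inf'_le (fun i => 1 - f i) (mem_univ i0)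

lemma inf'_add_inf' (f : ι₁ → ℝ) (g : ι₂ → ℝ) :
    Finset.univ.inf' univ_ne f + Finset.univ.inf' univ_ne g =
      Finset.univ.inf' univ_ne (fun p : ι₁ × ι₂ => f p.1 + g p.2) := by
  apply le_antisymm
  · apply Finset.le_inf'
    intro p _
    exact add_le_add (Finset.inf'_le _ (mem_univ p.1)) (Finset.inf'_le _ (mem_univ p.2))
  · obtain ⟨i0, -, h0⟩ := Finset.exists_mem_eq_inf' (univ_ne (ι := ι₁)) f
    obtain ⟨k0, -, h1⟩ := Finset.exists_mem_eq_inf' (univ_ne (ι := ι₂)) g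
    rw [h0, h1]
    exact Finset.inf'_le (fun p : ι₁ × ι₂ => f p.1 + g p.2) (mem_univ (i0, k0))

lemma sup'_add_sup' (f : ι₁ → ℝ) (g : ι₂ → ℝ) :
    Finset.univ.sup' univ_ne f + Finset.univ.sup' univ_ne g =
      Finset.univ.sup' univ_ne (fun p : ι₁ × ι₂ => f p.1 + g p.2) := by
  apply le_antisymm
  · obtain ⟨i0, -, h0⟩ := Finset.exists_mem_eq_sup' (univ_ne (ι := ι₁)) f
    obtain ⟨k0, -, h1⟩ := Finset.exists_mem_eq_sup' (univ_ne (ι := ι₂)) g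
    rw [h0, h1]
    exact Finset.le_sup' (fun p : ι₁ × ι₂ => f p.1 + g p.2) (mem_univ (i0, k0))
  · apply Finset.sup'_le
    intro p _
    exact add_le_add (Finset.le_sup' _ (mem_univ p.1)) (Finset.le_sup' _ (mem_univ p.2))

lemma sup'_inf'_swap [DecidableEq ι] (f : ι → κ → ℝ) :
    Finset.univ.sup' univ_ne (fun i => Finset.univ.inf' univ_ne (fun j => f i j)) =
      Finset.univ.inf' univ_ne (fun σ : ι → κ => Finset.univ.sup' univ_ne (fun i => f i (σ i))) := by
  apply le_antisymm
  · apply Finset.le_inf'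
    intro σ _
    apply Finset.sup'_le
    intro i _
    exact le_trans (Finset.inf'_le _ (mem_univ (σ i)))
      (Finset.le_sup' (fun i => f i (σ i)) (mem_univ i))
  · have hσ : ∀ i : ι, ∃ j : κ, Finset.univ.inf' univ_ne (fun j => f i j) = f i j := by
      intro i
      obtain ⟨j, -, hj⟩ := Finset.exists_mem_eq_inf' (univ_ne (ι := κ)) (fun j => f i j)
      exact ⟨j, hj⟩
    choose σ hσ using hσ
    refine le_trans (Finset.inf'_le _ (mem_univ σ)) ?_
    apply Finset.sup'_le
    intro i _
    rw [← hσ i]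
    exact Finset.le_sup' (fun i => Finset.univ.inf' univ_ne fun j => f i j) (mem_univ i)

lemma inf'_option (f : Option ι → ℝ) :
    Finset.univ.inf' univ_ne f = min (f none) (Finset.univ.inf' univ_ne (fun i => f (some i))) := by
  apply le_antisymm
  · refine le_min (Finset.inf'_le _ (mem_univ none)) ?_
    apply Finset.le_inf'
    intro i _
    exact Finset.inf'_le _ (mem_univ (some i))
  · apply Finset.le_inf'
    intro o _
    cases o with
    | none => exact min_le_left _ _
    | some i => exact le_trans (min_le_right _ _) (Finset.inf'_le _ (mem_univ i))

end helpers

lemma aff_neg {n : ℕ} (p : (Fin n → ℚ) × ℚ) (v : Fin n → ℝ) :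
    aff (fun l => -p.1 l, 1 - p.2) v = 1 - aff p v := by
  simp only [aff]
  push_cast
  rw [Finset.sum_congr rfl (fun i _ => by ring : ∀ i ∈ Finset.univ, (-(p.1 i : ℝ)) * v i = -((p.1 i : ℝ) * v i)), Finset.sum_neg_distrib]
  ring

lemma aff_add {n : ℕ} (p q : (Fin n → ℚ) × ℚ) (v : Fin n → ℝ) :
    aff (fun l => p.1 l + q.1 l, p.2 + q.2) v = aff p v + aff q v := by
  simp only [aff]
  push_cast
  rw [Finset.sum_congr rfl (fun i _ => by ring : ∀ i ∈ Finset.univ, ((p.1 i : ℝ) + (q.1 i : ℝ)) * v i = (p.1 i : ℝ) * v i + (q.1 i : ℝ) * v i), Finset.sum_add_distrib]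
  ring

lemma aff_one {n : ℕ} (v : Fin n → ℝ) : aff ((fun _ => 0), 1) v = 1 := by
  simp [aff]

theorem isMM_eval {n : ℕ} (t : MVTerm n) : IsMM t.eval := by
  induction t with
  | var i =>
    refine ⟨PUnit, PUnit, inferInstance, inferInstance, inferInstance, inferInstance,
      fun _ _ => (fun j => if j = i then 1 else 0, 0), fun v => ?_⟩
    rw [Finset.inf'_const, Finset.sup'_const]
    simp only [MVTerm.eval]
    simp [aff, apply_ite (fun q : ℚ => (q : ℝ)), ite_mul, Finset.sum_ite_eq']
  | zero =>
    refine ⟨PUnit, PUnit, inferInstance, inferInstance, inferInstance, inferInstance,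
      fun _ _ => (fun _ => 0, 0), fun v => ?_⟩
    rw [Finset.inf'_const, Finset.sup'_const]
    simp only [MVTerm.eval]
    simp [aff]
  | neg s ihs =>
    obtain ⟨ι, κ, hι, hκ, hne1, hne2, A, hA⟩ := ihs
    letI := hι; letI := hκ; letI := hne1; letI := hne2
    letI : DecidableEq ι := Classical.decEq ι
    refine ⟨ι → κ, ι, inferInstance, inferInstance, inferInstance, inferInstance,
      fun σ i => (fun l => -(A i (σ i)).1 l, 1 - (A i (σ i)).2), fun v => ?_⟩
    simp only [MVTerm.eval]
    calc 1 - s.eval v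
        = 1 - Finset.univ.inf' univ_ne
            (fun i => Finset.univ.sup' univ_ne (fun j => aff (A i j) v)) := by rw [hA]
      _ = Finset.univ.sup' univ_ne
            (fun i => 1 - Finset.univ.sup' univ_ne (fun j => aff (A i j) v)) := one_sub_inf' _
      _ = Finset.univ.sup' univ_ne
            (fun i => Finset.univ.inf' univ_ne (fun j => 1 - aff (A i j) v)) := by
          simp only [one_sub_sup']
      _ = Finset.univ.inf' univ_ne
            (fun σ : ι → κ => Finset.univ.sup' univ_ne (fun i => 1 - aff (A i (σ i)) v)) :=
          sup'_inf'_swap _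
      _ = _ := by simp only [← aff_neg]
  | oplus f g ihf ihg =>
    obtain ⟨ι₁, κ₁, hι₁, hκ₁, hn1, hn2, A, hA⟩ := ihf
    obtain ⟨ι₂, κ₂, hι₂, hκ₂, hn3, hn4, B, hB⟩ := ihg
    letI := hι₁; letI := hκ₁; letI := hn1; letI := hn2
    letI := hι₂; letI := hκ₂; letI := hn3; letI := hn4
    refine ⟨Option (ι₁ × ι₂), κ₁ × κ₂, inferInstance, inferInstance, inferInstance,
      inferInstance,
      fun o jl => o.elim ((fun _ => 0 : Fin n → ℚ), 1)
        (fun ik => (fun m => (A ik.1 jl.1).1 m + (B ik.2 jl.2).1 m,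
          (A ik.1 jl.1).2 + (B ik.2 jl.2).2)), fun v => ?_⟩
    simp only [MVTerm.eval]
    rw [inf'_option]
    simp only [Option.elim]
    rw [Finset.sup'_const, aff_one, min_comm]
    congr 1
    calc f.eval v + g.eval v
        = Finset.univ.inf' univ_ne
            (fun i => Finset.univ.sup' univ_ne (fun j => aff (A i j) v)) +
          Finset.univ.inf' univ_ne
            (fun i => Finset.univ.sup' univ_ne (fun j => aff (B i j) v)) := by rw [hA, hB]
      _ = Finset.univ.inf' univ_ne
            (fun p : ι₁ × ι₂ =>
              Finset.univ.sup' univ_ne (fun j => aff (A p.1 j) v) +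
              Finset.univ.sup' univ_ne (fun j => aff (B p.2 j) v)) := inf'_add_inf' _ _
      _ = Finset.univ.inf' univ_ne
            (fun p : ι₁ × ι₂ => Finset.univ.sup' univ_ne
              (fun q : κ₁ × κ₂ => aff (A p.1 q.1) v + aff (B p.2 q.2) v)) := by
          simp only [sup'_add_sup']
      _ = _ := by simp only [← aff_add]

lemma mem_le_foldr_max (l : List ℚ) (d x : ℚ) (hx : x ∈ l) : x ≤ l.foldr max d := by
  induction l with
  | nil => simp at hx
  | cons a t ih =>
    rcases List.mem_cons.mp hx with h | h
    · subst h; exact le_max_left _ _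
    · exact le_trans (ih h) (le_max_right _ _)

lemma foldr_max_le (l : List ℚ) (d c : ℚ) (hd : d ≤ c) (h : ∀ x ∈ l, x ≤ c) :
    l.foldr max d ≤ c := by
  induction l with
  | nil => simpa using hd
  | cons a t ih =>
    exact max_le (h a (by simp)) (ih fun x hx => h x (by simp [hx]))

lemma foldr_min_le (l : List ℚ) (d x : ℚ) (hx : x ∈ l) : l.foldr min d ≤ x := by
  induction l with
  | nil => simp at hx
  | cons a t ih =>
    rcases List.mem_cons.mp hx with h | h
    · subst h; exact min_le_left _ _
    · exact le_trans (min_le_right _ _) (ih h)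

lemma exists_rat_between_lists (Lo Up : List ℚ) (key : ∀ lo ∈ Lo, ∀ up ∈ Up, lo ≤ up) :
    ∃ y : ℚ, (∀ lo ∈ Lo, lo ≤ y) ∧ (∀ up ∈ Up, y ≤ up) := by
  cases Lo with
  | nil => exact ⟨Up.foldr min 0, by simp, fun up hup => foldr_min_le _ _ _ hup⟩
  | cons lo0 rest =>
    refine ⟨(lo0 :: rest).foldr max lo0, fun lo hlo => mem_le_foldr_max _ _ _ hlo,
      fun up hup => ?_⟩
    exact foldr_max_le _ _ _ (key lo0 (by simp) up hup) (fun lo hlo => key lo hlo up hup)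

/-- Fourier–Motzkin: a finite rational linear system solvable over ℝ is solvable over ℚ. -/
theorem ratsol (n : ℕ) : ∀ (L : List ((Fin n → ℚ) × ℚ)),
    (∃ x : Fin n → ℝ, ∀ p ∈ L, (∑ i, (p.1 i : ℝ) * x i) ≤ (p.2 : ℝ)) →
    ∃ x : Fin n → ℚ, ∀ p ∈ L, (∑ i, p.1 i * x i) ≤ p.2 := by
  induction n with
  | zero =>
    rintro L ⟨x, hx⟩
    refine ⟨fun _ => 0, fun p hp => ?_⟩
    have := hx p hp
    simp only [Finset.univ_eq_empty, Finset.sum_empty] at this ⊢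
    exact_mod_cast this
  | succ n ih =>
    rintro L ⟨x, hx⟩
    set b : ((Fin (n+1) → ℚ) × ℚ) → ℚ := fun p => p.1 (Fin.last n) with hbdef
    set A : ((Fin (n+1) → ℚ) × ℚ) → (Fin n → ℚ) := fun p i => p.1 i.castSucc with hAdef
    set red : ((Fin (n+1) → ℚ) × ℚ) → ((Fin n → ℚ) × ℚ) := fun p => (A p, p.2) with hreddef
    set comb : ((Fin (n+1) → ℚ) × ℚ) → ((Fin (n+1) → ℚ) × ℚ) → ((Fin n → ℚ) × ℚ) :=
      fun p q => (fun i => b q * A p i - b p * A q i, b q * p.2 - b p * q.2) with hcombdef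
    set L0 : List ((Fin n → ℚ) × ℚ) := (L.filter fun p => b p = 0).map red with hL0def
    set LP : List ((Fin n → ℚ) × ℚ) :=
      ((L.filter fun p => b p < 0).product (L.filter fun p => 0 < b p)).map
        (fun pq => comb pq.1 pq.2) with hLPdef
    -- the truncated real vector solves L0 ++ LP
    have hsplit : ∀ p ∈ L,
        (∑ i : Fin n, (A p i : ℝ) * x i.castSucc) + (b p : ℝ) * x (Fin.last n) ≤ (p.2 : ℝ) := by
      intro p hp
      have := hx p hp
      rwa [Fin.sum_univ_castSucc] at this
    have hreal : ∀ q ∈ L0 ++ LP, (∑ i, (q.1 i : ℝ) * x i.castSucc) ≤ (q.2 : ℝ) := by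
      intro q hq
      rcases List.mem_append.mp hq with hq | hq
      · obtain ⟨p, hp, rfl⟩ := List.mem_map.mp hq
        have hpf := List.mem_filter.mp hp
        have hb0 : b p = 0 := by simpa using hpf.2
        have := hsplit p hpf.1
        rw [hb0] at this
        simpa using this
      · obtain ⟨⟨p, q'⟩, hmem, rfl⟩ := List.mem_map.mp hq
        have hpm := List.pair_mem_product.mp hmem
        have hpf := List.mem_filter.mp hpm.1
        have hqf := List.mem_filter.mp hpm.2
        have hbp : b p < 0 := by simpa using hpf.2
        have hbq : 0 < b q' := by simpa using hqf.2
        have h1 := hsplit p hpf.1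
        have h2 := hsplit q' hqf.1
        have hbpR : (b p : ℝ) < 0 := by exact_mod_cast hbp
        have hbqR : (0:ℝ) < (b q' : ℝ) := by exact_mod_cast hbq
        have hsum : (∑ i, (((comb p q').1 i : ℝ)) * x i.castSucc)
            = (b q' : ℝ) * (∑ i, (A p i : ℝ) * x i.castSucc)
              - (b p : ℝ) * (∑ i, (A q' i : ℝ) * x i.castSucc) := by
          simp only [hcombdef]
          push_cast
          rw [Finset.mul_sum, Finset.mul_sum, ← Finset.sum_sub_distrib]
          congr 1; funext i; ring
        rw [hsum]
        have hc2 : ((comb p q').2 : ℝ) = (b q' : ℝ) * (p.2 : ℝ) - (b p : ℝ) * (q'.2 : ℝ) := by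
          simp only [hcombdef]; push_cast; ring
        rw [hc2]
        nlinarith [mul_le_mul_of_nonneg_left h1 hbqR.le,
          mul_le_mul_of_nonneg_left h2 (by linarith : (0:ℝ) ≤ -(b p : ℝ))]
    obtain ⟨z, hz⟩ := ih (L0 ++ LP) ⟨fun i => x i.castSucc, hreal⟩
    set S : ((Fin (n+1) → ℚ) × ℚ) → ℚ := fun p => ∑ i, A p i * z i with hSdef
    set Lo : List ℚ := (L.filter fun p => b p < 0).map (fun p => (p.2 - S p) / b p) with hLodef
    set Up : List ℚ := (L.filter fun p => 0 < b p).map (fun p => (p.2 - S p) / b p) with hUpdef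
    have key : ∀ lo ∈ Lo, ∀ up ∈ Up, lo ≤ up := by
      rintro lo hlo up hup
      obtain ⟨p, hp, rfl⟩ := List.mem_map.mp hlo
      obtain ⟨q, hq, rfl⟩ := List.mem_map.mp hup
      have hbp : b p < 0 := by simpa using (List.mem_filter.mp hp).2
      have hbq : 0 < b q := by simpa using (List.mem_filter.mp hq).2
      have hmem : comb p q ∈ L0 ++ LP :=
        List.mem_append_right _
          (List.mem_map.mpr ⟨(p, q), List.pair_mem_product.mpr ⟨hp, hq⟩, rfl⟩)
      have hcq := hz _ hmem
      have hsum : (∑ i, (comb p q).1 i * z i) = b q * S p - b p * S q := by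
        simp only [hcombdef, hSdef]
        rw [Finset.mul_sum, Finset.mul_sum, ← Finset.sum_sub_distrib]
        congr 1; funext i; ring
      rw [hsum] at hcq
      have hc2 : (comb p q).2 = b q * p.2 - b p * q.2 := rfl
      rw [hc2] at hcq
      rw [div_le_iff_of_neg hbp, div_mul_eq_mul_div, div_le_iff₀ hbq]
      nlinarith [hcq]
    -- choose the new coordinate
    obtain ⟨y, hy1, hy2⟩ := exists_rat_between_lists Lo Up key
    refine ⟨Fin.snoc z y, fun p hp => ?_⟩
    rw [Fin.sum_univ_castSucc]
    simp only [Fin.snoc_castSucc, Fin.snoc_last]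
    have hgoal : S p + b p * y ≤ p.2 → (∑ i : Fin n, p.1 i.castSucc * z i) + p.1 (Fin.last n) * y ≤ p.2 := by
      intro h; exact h
    apply hgoal
    rcases lt_trichotomy (b p) 0 with hb | hb | hb
    · have hmem : (p.2 - S p) / b p ∈ Lo :=
        List.mem_map.mpr ⟨p, List.mem_filter.mpr ⟨hp, by simpa using hb⟩, rfl⟩
      have h1 := hy1 _ hmem
      have h2 : b p * y ≤ b p * ((p.2 - S p) / b p) := mul_le_mul_of_nonpos_left h1 hb.le
      rw [mul_div_cancel₀ _ hb.ne] at h2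
      linarith
    · have hmem : red p ∈ L0 ++ LP :=
        List.mem_append_left _
          (List.mem_map.mpr ⟨p, List.mem_filter.mpr ⟨hp, by simpa using hb⟩, rfl⟩)
      have := hz _ hmem
      simp only [hreddef] at this
      rw [hb]
      simpa using this
    · have hmem : (p.2 - S p) / b p ∈ Up :=
        List.mem_map.mpr ⟨p, List.mem_filter.mpr ⟨hp, by simpa using hb⟩, rfl⟩
      have h1 := hy2 _ hmem
      have h2 : b p * y ≤ b p * ((p.2 - S p) / b p) := mul_le_mul_of_nonneg_left h1 hb.le
      rw [mul_div_cancel₀ _ hb.ne'] at h2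
      linarith


lemma eval_mem_unit {n : ℕ} (t : MVTerm n) (v : Fin n → ℝ) (hv : ∀ j, 0 ≤ v j ∧ v j ≤ 1) :
    0 ≤ t.eval v ∧ t.eval v ≤ 1 := by
  induction t with
  | var i => simpa only [MVTerm.eval] using hv i
  | zero => simp [MVTerm.eval]
  | neg s ih =>
    simp only [MVTerm.eval]
    constructor <;> linarith [ih.1, ih.2]
  | oplus f g ihf ihg =>
    simp only [MVTerm.eval]
    constructor
    · exact le_min (by linarith [ihf.1, ihg.1]) zero_le_one
    · exact min_le_right _ _

lemma rational_witness {n : ℕ} (t : MVTerm n) (v : Fin n → ℝ)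
    (hv : ∀ j, 0 ≤ v j ∧ v j ≤ 1) (h1 : t.eval v = 1) :
    ∃ w : Fin n → ℚ, (∀ j, 0 ≤ w j ∧ w j ≤ 1) ∧ t.eval (fun j => (w j : ℝ)) = 1 := by
  obtain ⟨ι, κ, hι, hκ, hne1, hne2, A, hA⟩ := isMM_eval t
  letI := hι; letI := hκ; letI := hne1; letI := hne2
  have hrow : ∀ i : ι, ∃ j : κ, 1 ≤ aff (A i j) v := by
    intro i
    obtain ⟨j, -, hj⟩ := Finset.exists_mem_eq_sup' univ_ne (fun j => aff (A i j) v)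
    refine ⟨j, ?_⟩
    rw [← hj]
    have h := Finset.inf'_le
      (fun i => Finset.univ.sup' univ_ne (fun j => aff (A i j) v)) (mem_univ i)
    rw [← hA, h1] at h
    exact h
  choose σ hσ using hrow
  set Lrow : List ((Fin n → ℚ) × ℚ) :=
    Finset.univ.toList.map
      (fun i : ι => ((fun l => -(A i (σ i)).1 l), (A i (σ i)).2 - 1)) with hLrow
  set Lub : List ((Fin n → ℚ) × ℚ) :=
    (List.finRange n).map (fun l => ((fun l' => if l' = l then (1:ℚ) else 0), (1:ℚ))) with hLub
  set Llb : List ((Fin n → ℚ) × ℚ) :=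
    (List.finRange n).map (fun l => ((fun l' => if l' = l then (-1:ℚ) else 0), (0:ℚ))) with hLlb
  have hrealsol : ∀ p ∈ Lrow ++ (Lub ++ Llb), (∑ l, (p.1 l : ℝ) * v l) ≤ (p.2 : ℝ) := by
    intro p hp
    rcases List.mem_append.mp hp with hp | hp
    · obtain ⟨i, -, rfl⟩ := List.mem_map.mp hp
      have h := hσ i
      simp only [aff] at h
      push_cast
      have hs : (∑ l, -(((A i (σ i)).1 l : ℝ)) * v l)
          = -(∑ l, ((A i (σ i)).1 l : ℝ) * v l) := by
        rw [← Finset.sum_neg_distrib]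
        congr 1; funext l; ring
      rw [hs]
      linarith
    rcases List.mem_append.mp hp with hp | hp
    · obtain ⟨l, -, rfl⟩ := List.mem_map.mp hp
      have hh : (∑ l', ((if l' = l then (1:ℚ) else 0 : ℚ) : ℝ) * v l') = v l := by
        simp [apply_ite (fun q : ℚ => (q : ℝ)), ite_mul, Finset.sum_ite_eq']
      calc (∑ l', ((if l' = l then (1:ℚ) else 0 : ℚ) : ℝ) * v l') = v l := hh
        _ ≤ ((1:ℚ) : ℝ) := by exact_mod_cast (hv l).2
    · obtain ⟨l, -, rfl⟩ := List.mem_map.mp hp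
      have hh : (∑ l', ((if l' = l then (-1:ℚ) else 0 : ℚ) : ℝ) * v l') = -(v l) := by
        simp [apply_ite (fun q : ℚ => (q : ℝ)), ite_mul, Finset.sum_ite_eq']
      calc (∑ l', ((if l' = l then (-1:ℚ) else 0 : ℚ) : ℝ) * v l') = -(v l) := hh
        _ ≤ ((0:ℚ) : ℝ) := by push_cast; linarith [(hv l).1]
  obtain ⟨w, hw⟩ := ratsol n (Lrow ++ (Lub ++ Llb)) ⟨v, hrealsol⟩
  have hwub : ∀ l, w l ≤ 1 := by
    intro l
    have h := hw _ (List.mem_append_right _ (List.mem_append_left _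
      (List.mem_map.mpr ⟨l, List.mem_finRange l, rfl⟩)))
    have hh : (∑ l', (if l' = l then (1:ℚ) else 0) * w l') = w l := by
      simp [ite_mul, Finset.sum_ite_eq']
    rw [hh] at h
    exact h
  have hwlb : ∀ l, 0 ≤ w l := by
    intro l
    have h := hw _ (List.mem_append_right _ (List.mem_append_right _
      (List.mem_map.mpr ⟨l, List.mem_finRange l, rfl⟩)))
    have hh : (∑ l', (if l' = l then (-1:ℚ) else 0) * w l') = -(w l) := by
      simp [ite_mul, Finset.sum_ite_eq']
    rw [hh] at h
    have h' : -(w l) ≤ (0:ℚ) := h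
    linarith
  refine ⟨w, fun l => ⟨hwlb l, hwub l⟩, ?_⟩
  have hcube : ∀ j, 0 ≤ ((w j : ℚ) : ℝ) ∧ ((w j : ℚ) : ℝ) ≤ 1 := fun j =>
    ⟨by exact_mod_cast hwlb j, by exact_mod_cast hwub j⟩
  refine le_antisymm ((eval_mem_unit t _ hcube).2) ?_
  rw [hA]
  apply Finset.le_inf'
  intro i _
  refine le_trans ?_
    (Finset.le_sup' (fun j => aff (A i j) (fun l => ((w l : ℚ) : ℝ))) (mem_univ (σ i)))
  have h := hw _ (List.mem_append_left _
    (List.mem_map.mpr ⟨i, Finset.mem_toList.mpr (mem_univ i), rfl⟩))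
  have hs : (∑ l, -((A i (σ i)).1 l) * w l) = -(∑ l, (A i (σ i)).1 l * w l) := by
    rw [← Finset.sum_neg_distrib]
    congr 1; funext l; ring
  rw [hs] at h
  have h' : -(∑ l, (A i (σ i)).1 l * w l) ≤ (A i (σ i)).2 - 1 := h
  have h2 : (1:ℚ) ≤ (∑ l, (A i (σ i)).1 l * w l) + (A i (σ i)).2 := by linarith
  simp only [aff]
  exact_mod_cast h2

/-- For any irrational `ξ ∈ [0,1]`, there is no countable family of MV-terms
`tᵢ(x, y⃗ᵢ)` such that for all `a ∈ [0,1]`, the condition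
`∃ i ∃ y⃗ᵢ ∈ [0,1]^{kᵢ}, tᵢ(a, y⃗ᵢ) = 1` holds if and only if `a = ξ`. -/
theorem irrational_not_geometrically_definable (ξ : ℝ) (hξ : ξ ∈ Set.Icc (0 : ℝ) 1)
    (hirr : Irrational ξ) :
    ¬ ∃ (k : ℕ → ℕ) (t : ∀ i : ℕ, MVTerm (k i + 1)),
      ∀ a ∈ Set.Icc (0 : ℝ) 1,
        ((∃ (i : ℕ) (v : Fin (k i + 1) → ℝ),
            (∀ j, v j ∈ Set.Icc (0 : ℝ) 1) ∧ v 0 = a ∧ (t i).eval v = 1) ↔ a = ξ) := by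
  rintro ⟨k, t, h⟩
  obtain ⟨i, v, hv, hv0, he⟩ := (h ξ hξ).mpr rfl
  have hv' : ∀ j, 0 ≤ v j ∧ v j ≤ 1 := fun j => ⟨(hv j).1, (hv j).2⟩
  obtain ⟨w, hwcube, hwe⟩ := rational_witness (t i) v hv' he
  have ha : ((w 0 : ℚ) : ℝ) ∈ Set.Icc (0:ℝ) 1 :=
    ⟨by exact_mod_cast (hwcube 0).1, by exact_mod_cast (hwcube 0).2⟩
  have heq : ((w 0 : ℚ) : ℝ) = ξ :=
    (h _ ha).mp ⟨i, fun j => ((w j : ℚ) : ℝ),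
      fun j => ⟨by show (0:ℝ) ≤ ((w j : ℚ) : ℝ); exact_mod_cast (hwcube j).1,
        by show ((w j : ℚ) : ℝ) ≤ 1; exact_mod_cast (hwcube j).2⟩, rfl, hwe⟩
  exact hirr ⟨w 0, heq⟩
end
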